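/- Let 0 < α ≤ 1, β > 0, c ∈ ℝ, and define E(t) = ∑_{j=0}^∞ (−c)^j t^{αj} / Γ(αj + β) for t > 0, where Γ is the Euler Gamma function. Then t^{1−α} · E'(t) tends to −cα / Γ(α + β) as t → 0⁺. -/

import Mathlib

open Real Set Filter Topology

lemma ml_gamma_interp (α : ℝ) (hα0 : 0 < α) (hα1 : α ≤ 1) {x : ℝ} (hx : 0 < x) :
    x * Real.Gamma x ≤ Real.Gamma (x + α) * (x + α) ^ (1 - α) := by
  have hxα : 0 < x + α := by linarith
  have h1 : (0:ℝ) < x + α + 1 := by linarith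
  have hG : Real.Gamma (x + α + 1) = (x + α) * Real.Gamma (x + α) :=
    Real.Gamma_add_one hxα.ne'
  have key := Real.convexOn_log_Gamma.2 (mem_Ioi.2 hxα) (mem_Ioi.2 h1)
    hα0.le (by linarith : (0:ℝ) ≤ 1 - α) (by ring)
  simp only [smul_eq_mul, Function.comp] at key
  rw [show α * (x + α) + (1 - α) * (x + α + 1) = x + 1 by ring] at key
  have hΓpos : 0 < Real.Gamma (x + α) := Real.Gamma_pos_of_pos hxα
  rw [hG, Real.log_mul hxα.ne' hΓpos.ne'] at key
  have key2 : Real.log (Real.Gamma (x + 1)) ≤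
      Real.log (Real.Gamma (x + α)) + (1 - α) * Real.log (x + α) := by nlinarith
  have h3 : Real.Gamma (x + 1) ≤ Real.Gamma (x + α) * (x + α) ^ (1 - α) := by
    have := Real.exp_le_exp.2 key2
    rw [Real.exp_log (Real.Gamma_pos_of_pos (by linarith : (0:ℝ) < x + 1)),
      Real.exp_add, Real.exp_log hΓpos] at this
    rw [Real.rpow_def_of_pos hxα]
    calc Real.Gamma (x+1) ≤ Real.Gamma (x+α) * Real.exp ((1-α) * Real.log (x+α)) := this
    _ = Real.Gamma (x+α) * Real.exp (Real.log (x+α) * (1-α)) := by rw [mul_comm (1-α)]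
  rwa [Real.Gamma_add_one hx.ne'] at h3

lemma ml_gamma_ratio_event (α β q : ℝ) (hα0 : 0 < α) (hα1 : α ≤ 1) (hβ : 0 < β) :
    ∀ᶠ j : ℕ in atTop, q * Real.Gamma (α * j + β) ≤ Real.Gamma (α * (j + 1) + β) := by
  have hx : Tendsto (fun j : ℕ => α * j + β) atTop atTop := by
    apply tendsto_atTop_add_const_right
    exact (tendsto_natCast_atTop_atTop (R := ℝ)).const_mul_atTop hα0
  have hpow : Tendsto (fun j : ℕ => (2:ℝ) ^ (α - 1) * (α * j + β) ^ α) atTop atTop := by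
    apply Tendsto.const_mul_atTop (by positivity)
    exact (tendsto_rpow_atTop hα0).comp hx
  filter_upwards [hx.eventually_ge_atTop 1, hx.eventually_ge_atTop α,
    hpow.eventually_ge_atTop q] with j h1 hA h2
  set x := α * (j:ℝ) + β with hxdef
  have hx0 : (0:ℝ) < x := by positivity
  have harg : α * ((j:ℝ) + 1) + β = x + α := by rw [hxdef]; ring
  rw [harg]
  have hGx : 0 < Real.Gamma x := Real.Gamma_pos_of_pos hx0
  have hGxa : 0 < Real.Gamma (x + α) := Real.Gamma_pos_of_pos (by linarith)
  have key := ml_gamma_interp α hα0 hα1 hx0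
  -- (x+α)^(1-α) ≤ (2x)^(1-α)
  have h2x : (x + α) ^ (1-α) ≤ (2*x) ^ (1-α) :=
    Real.rpow_le_rpow (by linarith) (by linarith) (by linarith)
  have hmul : (2*x) ^ (1-α) = 2 ^ (1-α) * x ^ (1-α) :=
    Real.mul_rpow (by norm_num) hx0.le
  have e1 : x ^ α * x ^ (1-α) = x := by
    rw [← Real.rpow_add hx0]; norm_num
  have e2 : (2:ℝ) ^ (α-1) * 2 ^ (1-α) = 1 := by
    rw [← Real.rpow_add (by norm_num : (0:ℝ) < 2)]; norm_num
  -- q * (2x)^{1-α} ≤ x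
  have hq2 : q * (2*x) ^ (1-α) ≤ x := by
    have hpos1 : (0:ℝ) < (2*x) ^ (1-α) := Real.rpow_pos_of_pos (by linarith) _
    calc q * (2*x)^(1-α) ≤ (2 ^ (α-1) * x ^ α) * (2*x)^(1-α) := by
          apply mul_le_mul_of_nonneg_right h2 hpos1.le
      _ = (2 ^ (α-1) * 2 ^ (1-α)) * (x ^ α * x ^ (1-α)) := by rw [hmul]; ring
      _ = x := by rw [e1, e2, one_mul]
  -- conclude
  have hchain : x * Real.Gamma x ≤ Real.Gamma (x+α) * (2*x) ^ (1-α) := by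
    calc x * Real.Gamma x ≤ Real.Gamma (x+α) * (x+α)^(1-α) := key
      _ ≤ Real.Gamma (x+α) * (2*x)^(1-α) := by
          apply mul_le_mul_of_nonneg_left h2x hGxa.le
  have hpos1 : (0:ℝ) < (2*x) ^ (1-α) := Real.rpow_pos_of_pos (by linarith) _
  -- q Γx (2x)^{1-α} ≤ x Γx ≤ Γ(x+α)(2x)^{1-α}
  have : q * Real.Gamma x * (2*x)^(1-α) ≤ Real.Gamma (x+α) * (2*x)^(1-α) := by
    calc q * Real.Gamma x * (2*x)^(1-α) = (q * (2*x)^(1-α)) * Real.Gamma x := by ring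
      _ ≤ x * Real.Gamma x := mul_le_mul_of_nonneg_right hq2 hGx.le
      _ ≤ Real.Gamma (x+α) * (2*x)^(1-α) := hchain
  exact le_of_mul_le_mul_right this hpos1

lemma ml_summable_aux (α β : ℝ) (hα0 : 0 < α) (hα1 : α ≤ 1) (hβ : 0 < β)
    (q : ℝ) (hq : 0 < q) :
    Summable (fun j : ℕ => q ^ j / Real.Gamma (α * j + β)) := by
  have hΓ : ∀ j : ℕ, 0 < Real.Gamma (α * j + β) :=
    fun j => Real.Gamma_pos_of_pos (by positivity)
  refine summable_of_ratio_norm_eventually_le (r := 1/2) (by norm_num) ?_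
  filter_upwards [ml_gamma_ratio_event α β (2*q) hα0 hα1 hβ] with j hj
  have hG1 := hΓ j
  have hG2 := hΓ (j+1)
  have hc : α * (((j:ℕ):ℝ) + 1) + β = α * ((j+1 : ℕ) : ℝ) + β := by push_cast; ring
  rw [hc] at hj
  rw [Real.norm_eq_abs, Real.norm_eq_abs, abs_of_pos (by positivity), abs_of_pos (by positivity)]
  rw [div_le_iff₀ hG2, pow_succ]
  have hqj : (0:ℝ) < q ^ j := by positivity
  calc q ^ j * q = 1/2 * (q ^ j / Real.Gamma (α*j+β)) * (2 * q * Real.Gamma (α*j+β)) := by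
        field_simp
    _ ≤ 1/2 * (q ^ j / Real.Gamma (α*j+β)) * Real.Gamma (α*((j+1:ℕ):ℝ)+β) := by
        apply mul_le_mul_of_nonneg_left hj (by positivity)

/-- Limit of the weighted derivative of the Mittag-Leffler time factor:
for `E(t) = ∑_j (-c)^j t^{αj}/Γ(αj+β)` one has
`t^{1-α} E'(t) → -cα/Γ(α+β)` as `t → 0⁺`. -/
theorem mittagLeffler_weighted_deriv_limit
    (α β c : ℝ) (hα0 : 0 < α) (hα1 : α ≤ 1) (hβ : 0 < β)
    (E : ℝ → ℝ)
    (hE : ∀ t : ℝ, 0 < t →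
      E t = ∑' j : ℕ, (-c) ^ j * t ^ (α * j) / Real.Gamma (α * j + β)) :
    Tendsto (fun t : ℝ => t ^ (1 - α) * deriv E t)
      (𝓝[>] (0 : ℝ)) (𝓝 (-c * α / Real.Gamma (α + β))) := by
  have hΓ : ∀ j : ℕ, 0 < Real.Gamma (α * j + β) :=
    fun j => Real.Gamma_pos_of_pos (by positivity)
  set F : ℕ → ℝ → ℝ := fun j y => (-c) ^ j * y ^ (α * j) / Real.Gamma (α * j + β) with hF
  set F' : ℕ → ℝ → ℝ :=
    fun j y => (-c) ^ j * (α * j * y ^ (α * j - 1)) / Real.Gamma (α * j + β) with hF'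
  -- Step 1: derivative of E at every t > 0
  have hderivE : ∀ t : ℝ, 0 < t → HasDerivAt E (∑' j, F' j t) t := by
    intro t ht
    set q : ℝ := 2 * (|c| + 1) * (2 * t) ^ α with hqdef
    have hq0 : 0 < q := by positivity
    have hu : Summable (fun j : ℕ => (2 / t) * (q ^ j / Real.Gamma (α * j + β))) :=
      (ml_summable_aux α β hα0 hα1 hβ q hq0).mul_left _
    have hFd : ∀ (j : ℕ), ∀ y ∈ Ioo (t / 2) (2 * t), HasDerivAt (F j) (F' j y) y := by
      intro j y hy
      have hy0 : 0 < y := lt_trans (by linarith) hy.1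
      exact ((Real.hasDerivAt_rpow_const (p := α * j)
        (Or.inl hy0.ne')).const_mul ((-c) ^ j)).div_const _
    have hbound : ∀ (j : ℕ), ∀ y ∈ Ioo (t / 2) (2 * t),
        ‖F' j y‖ ≤ (2 / t) * (q ^ j / Real.Gamma (α * j + β)) := by
      intro j y hy
      have hy0 : 0 < y := lt_trans (by linarith) hy.1
      have hyp : (0:ℝ) < y ^ (α * j - 1) := Real.rpow_pos_of_pos hy0 _
      have habs : ‖F' j y‖ = |c| ^ j * (α * j * y ^ (α * j - 1)) / Real.Gamma (α * j + β) := by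
        rw [hF', Real.norm_eq_abs, abs_div, abs_of_pos (hΓ j), abs_mul, abs_pow, abs_neg,
          abs_of_nonneg (show (0:ℝ) ≤ α * ↑j * y ^ (α * ↑j - 1) by positivity)]
      rw [habs]
      have hsplit : y ^ (α * j - 1) = y ^ (α * j) / y := by
        rw [Real.rpow_sub hy0, Real.rpow_one]
      have h1 : y ^ (α * j) ≤ ((2 * t) ^ α) ^ j := by
        calc y ^ (α * j) ≤ (2 * t) ^ (α * j) :=
              Real.rpow_le_rpow hy0.le hy.2.le (by positivity)
          _ = ((2 * t) ^ α) ^ (j : ℝ) := by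
              rw [← Real.rpow_mul (by positivity)]
          _ = ((2 * t) ^ α) ^ j := Real.rpow_natCast _ j
      have h2 : 1 / y ≤ 2 / t := by
        have := one_div_le_one_div_of_le (by positivity : (0:ℝ) < t / 2) hy.1.le
        rwa [one_div_div] at this
      have h3 : y ^ (α * j - 1) ≤ ((2 * t) ^ α) ^ j * (2 / t) := by
        rw [hsplit, div_eq_mul_one_div]
        apply mul_le_mul h1 h2 (by positivity) (by positivity)
      have h4 : α * (j:ℝ) ≤ 2 ^ j := by
        calc α * (j:ℝ) ≤ 1 * j := by
              apply mul_le_mul_of_nonneg_right hα1 (by positivity)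
          _ = (j:ℝ) := one_mul _
          _ ≤ 2 ^ j := by exact_mod_cast (Nat.lt_two_pow_self (n := j)).le
      have h5 : |c| ^ j ≤ (|c| + 1) ^ j :=
        pow_le_pow_left₀ (abs_nonneg c) (by linarith) j
      calc |c| ^ j * (α * j * y ^ (α * j - 1)) / Real.Gamma (α * j + β)
          ≤ (|c| + 1) ^ j * (2 ^ j * (((2 * t) ^ α) ^ j * (2 / t)))
              / Real.Gamma (α * j + β) := by
            rw [div_le_div_iff_of_pos_right (hΓ j)]
            apply mul_le_mul h5 ?_ (by positivity) (by positivity)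
            apply mul_le_mul h4 h3 (by positivity) (by positivity)
        _ = (2 / t) * (q ^ j / Real.Gamma (α * j + β)) := by
            rw [hqdef, mul_pow, mul_pow]; ring
    have hmem : t ∈ Ioo (t / 2) (2 * t) := ⟨by linarith, by linarith⟩
    have hsum0 : Summable (fun j => F j t) := by
      apply Summable.of_abs
      refine Summable.of_nonneg_of_le (fun j => abs_nonneg _) (fun j => ?_)
        (ml_summable_aux α β hα0 hα1 hβ ((|c| + 1) * (t ^ α + 1)) (by positivity))
      have habs : |F j t| = |c| ^ j * t ^ (α * j) / Real.Gamma (α * j + β) := by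
        rw [hF, abs_div, abs_of_pos (hΓ j), abs_mul, abs_pow, abs_neg,
          abs_of_nonneg (Real.rpow_nonneg ht.le _)]
      rw [habs, mul_pow, div_le_div_iff_of_pos_right (hΓ j)]
      apply mul_le_mul (pow_le_pow_left₀ (abs_nonneg c) (by linarith) j) ?_
        (Real.rpow_nonneg ht.le _) (by positivity)
      calc t ^ (α * j) = (t ^ α) ^ j := by
            rw [← Real.rpow_natCast (t ^ α) j, ← Real.rpow_mul ht.le]
        _ ≤ (t ^ α + 1) ^ j := pow_le_pow_left₀ (by positivity) (by linarith) j
    have key := hasDerivAt_tsum_of_isPreconnected hu isOpen_Ioo isPreconnected_Ioo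
      hFd hbound hmem hsum0 hmem
    have heq : E =ᶠ[𝓝 t] fun y => ∑' j, F j y :=
      eventually_of_mem (isOpen_Ioi.mem_nhds ht) (fun y hy => hE y hy)
    exact key.congr_of_eventuallyEq heq
  -- Step 2: the limit of the reweighted termwise series
  have main : Tendsto
      (fun t : ℝ => ∑' j : ℕ, (-c) ^ j * (α * j) * t ^ (α * j - α) / Real.Gamma (α * j + β))
      (𝓝[>] (0 : ℝ)) (𝓝 (-c * α / Real.Gamma (α + β))) := by
    have hL : (-c * α / Real.Gamma (α + β)) =
        ∑' j : ℕ, (if j = 1 then -c * α / Real.Gamma (α + β) else 0) := (tsum_ite_eq 1 (fun _ => -c * α / Real.Gamma (α + β))).symm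
    rw [hL]
    apply tendsto_tsum_of_dominated_convergence
      (bound := fun j : ℕ => (2 * (|c| + 1)) ^ j / Real.Gamma (α * j + β))
    · exact ml_summable_aux α β hα0 hα1 hβ _ (by positivity)
    · intro j
      rcases eq_or_ne j 1 with rfl | hj1
      · simp only [if_pos rfl]
        have : ∀ t : ℝ, (-c) ^ 1 * (α * (1:ℕ)) * t ^ (α * (1:ℕ) - α) / Real.Gamma (α * (1:ℕ) + β)
            = -c * α / Real.Gamma (α + β) := by
          intro t
          norm_num
        simp only [this]
        exact tendsto_const_nhds
      · rcases Nat.eq_zero_or_pos j with rfl | hj0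
        · simp only [if_neg hj1]
          have : ∀ t : ℝ, (-c) ^ 0 * (α * (0:ℕ)) * t ^ (α * (0:ℕ) - α) / Real.Gamma (α * (0:ℕ) + β)
              = 0 := by intro t; norm_num
          simp only [this]
          exact tendsto_const_nhds
        · -- j ≥ 2
          have hj2 : 2 ≤ j := by omega
          have hp : 0 < α * j - α := by
            have : (2:ℝ) ≤ j := by exact_mod_cast hj2
            nlinarith
          have h0 : Tendsto (fun t : ℝ => t ^ (α * j - α)) (𝓝[>] 0) (𝓝 0) := by
            have hc := (Real.continuousAt_rpow_const 0 (α * j - α) (Or.inr hp.le)).tendsto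
            rw [Real.zero_rpow hp.ne'] at hc
            exact hc.mono_left nhdsWithin_le_nhds
          have := (h0.const_mul ((-c) ^ j * (α * j))).div_const (Real.Gamma (α * j + β))
          simp only [mul_zero, zero_div] at this
          simp only [if_neg hj1]
          exact this
    · filter_upwards [Ioo_mem_nhdsGT_of_mem (by norm_num : (0:ℝ) ∈ Ico (0:ℝ) 1)] with t ht
      intro j
      have ht0 : 0 < t := ht.1
      rcases Nat.eq_zero_or_pos j with rfl | hj0
      · norm_num
        positivity
      · have hp0 : 0 ≤ α * j - α := by
          have : (1:ℝ) ≤ j := by exact_mod_cast hj0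
          nlinarith
        have habs : ‖(-c) ^ j * (α * j) * t ^ (α * j - α) / Real.Gamma (α * j + β)‖
            = |c| ^ j * (α * j) * t ^ (α * j - α) / Real.Gamma (α * j + β) := by
          rw [Real.norm_eq_abs, abs_div, abs_of_pos (hΓ j), abs_mul, abs_mul, abs_pow, abs_neg,
            abs_of_nonneg (by positivity : (0:ℝ) ≤ α * j),
            abs_of_nonneg (Real.rpow_nonneg ht0.le _)]
        rw [habs, div_le_div_iff_of_pos_right (hΓ j)]
        have h4 : α * (j:ℝ) ≤ 2 ^ j := by
          calc α * (j:ℝ) ≤ 1 * j := mul_le_mul_of_nonneg_right hα1 (by positivity)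
            _ = (j:ℝ) := one_mul _
            _ ≤ 2 ^ j := by exact_mod_cast (Nat.lt_two_pow_self (n := j)).le
        calc |c| ^ j * (α * j) * t ^ (α * j - α)
            ≤ (|c| + 1) ^ j * 2 ^ j * 1 := by
              apply mul_le_mul ?_ (Real.rpow_le_one ht0.le ht.2.le hp0) ?_ (by positivity)
              · exact mul_le_mul (pow_le_pow_left₀ (abs_nonneg c) (by linarith) j) h4
                  (by positivity) (by positivity)
              · exact Real.rpow_nonneg ht0.le _
          _ = (2 * (|c| + 1)) ^ j := by rw [mul_pow]; ring
  -- Step 3: conclude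
  apply main.congr'
  filter_upwards [self_mem_nhdsWithin] with t ht
  have hd := (hderivE t ht).deriv
  rw [hd, ← tsum_mul_left]
  refine tsum_congr fun j => Eq.symm ?_
  have hrw : t ^ (1 - α) * t ^ (α * j - 1) = t ^ (α * j - α) := by
    rw [← Real.rpow_add ht]
    congr 1
    ring
  calc t ^ (1 - α) * F' j t
      = (-c) ^ j * (α * j) * (t ^ (1 - α) * t ^ (α * j - 1)) / Real.Gamma (α * j + β) := by
        rw [hF']; ring
    _ = (-c) ^ j * (α * j) * t ^ (α * j - α) / Real.Gamma (α * j + β) := by rw [hrw]
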